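/- If G is a finite abelian group and H1, H2, H3, H4 are subgroups of G, then the Ingleton inequality holds for (H1, H2, H3, H4); that is, abelian groups contain no Ingleton offenders. -/

import Mathlib

/-- Product formula for subgroups of a finite commutative group. -/
lemma ingleton_aux_card_sup_mul_card_inf {G : Type*} [CommGroup G] [Finite G]
    (A B : Subgroup G) :
    Nat.card (A ⊔ B : Subgroup G) * Nat.card (A ⊓ B : Subgroup G) =
      Nat.card A * Nat.card B := by
  have h1 : Nat.card ((A ⊓ B).subgroupOf A) * (A ⊓ B).relIndex A = Nat.card A :=
    Subgroup.card_mul_index ((A ⊓ B).subgroupOf A)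
  have e1 : Nat.card ((A ⊓ B).subgroupOf A) = Nat.card (A ⊓ B : Subgroup G) :=
    Nat.card_congr (Subgroup.subgroupOfEquivOfLe inf_le_left).toEquiv
  have h2 : Nat.card (B.subgroupOf (A ⊔ B)) * B.relIndex (A ⊔ B) =
      Nat.card (A ⊔ B : Subgroup G) :=
    Subgroup.card_mul_index (B.subgroupOf (A ⊔ B))
  have e2 : Nat.card (B.subgroupOf (A ⊔ B)) = Nat.card B :=
    Nat.card_congr (Subgroup.subgroupOfEquivOfLe le_sup_right).toEquiv
  have r1 : (A ⊓ B).relIndex A = B.relIndex A := Subgroup.inf_relIndex_left A B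
  have r2 : B.relIndex (A ⊔ B) = B.relIndex A := Subgroup.relIndex_sup_right A B
  rw [e1, r1] at h1
  rw [e2, r2] at h2
  calc Nat.card (A ⊔ B : Subgroup G) * Nat.card (A ⊓ B : Subgroup G)
      = Nat.card B * B.relIndex A * Nat.card (A ⊓ B : Subgroup G) := by rw [h2]
    _ = Nat.card B * (Nat.card (A ⊓ B : Subgroup G) * B.relIndex A) := by ring
    _ = Nat.card A * Nat.card B := by rw [h1]; ring

theorem stmt14 {G : Type*} [CommGroup G] [Finite G] (H1 H2 H3 H4 : Subgroup G) :
    Nat.card (H1 : Subgroup G) * Nat.card (H2 : Subgroup G) * Nat.card (H3 ⊓ H4 : Subgroup G) * Nat.card (H1 ⊓ H2 ⊓ H3 : Subgroup G) * Nat.card (H1 ⊓ H2 ⊓ H4 : Subgroup G) ≥ Nat.card (H1 ⊓ H2 : Subgroup G) * Nat.card (H1 ⊓ H3 : Subgroup G) * Nat.card (H1 ⊓ H4 : Subgroup G) * Nat.card (H2 ⊓ H3 : Subgroup G) * Nat.card (H2 ⊓ H4 : Subgroup G) := by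
  set P := H1 ⊔ H2 with hP
  have mono : ∀ A B : Subgroup G, A ≤ B → Nat.card A ≤ Nat.card B := fun A B h =>
    Subgroup.card_le_of_le h
  -- step for H3
  have i3 : (H1 ⊓ H3) ⊓ (H2 ⊓ H3) = H1 ⊓ H2 ⊓ H3 := by
    ext x; simp only [Subgroup.mem_inf]; tauto
  have s3 : (H1 ⊓ H3) ⊔ (H2 ⊓ H3) ≤ H3 ⊓ P :=
    sup_le (le_inf inf_le_right (inf_le_left.trans le_sup_left))
      (le_inf inf_le_right (inf_le_left.trans le_sup_right))
  have step3 : Nat.card (H1 ⊓ H3 : Subgroup G) * Nat.card (H2 ⊓ H3 : Subgroup G) ≤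
      Nat.card (H3 ⊓ P : Subgroup G) * Nat.card (H1 ⊓ H2 ⊓ H3 : Subgroup G) := by
    rw [← ingleton_aux_card_sup_mul_card_inf (H1 ⊓ H3) (H2 ⊓ H3), i3]
    exact Nat.mul_le_mul_right _ (mono _ _ s3)
  -- step for H4
  have i4 : (H1 ⊓ H4) ⊓ (H2 ⊓ H4) = H1 ⊓ H2 ⊓ H4 := by
    ext x; simp only [Subgroup.mem_inf]; tauto
  have s4 : (H1 ⊓ H4) ⊔ (H2 ⊓ H4) ≤ H4 ⊓ P :=
    sup_le (le_inf inf_le_right (inf_le_left.trans le_sup_left))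
      (le_inf inf_le_right (inf_le_left.trans le_sup_right))
  have step4 : Nat.card (H1 ⊓ H4 : Subgroup G) * Nat.card (H2 ⊓ H4 : Subgroup G) ≤
      Nat.card (H4 ⊓ P : Subgroup G) * Nat.card (H1 ⊓ H2 ⊓ H4 : Subgroup G) := by
    rw [← ingleton_aux_card_sup_mul_card_inf (H1 ⊓ H4) (H2 ⊓ H4), i4]
    exact Nat.mul_le_mul_right _ (mono _ _ s4)
  -- combine the two middle subgroups
  have step34 : Nat.card (H3 ⊓ P : Subgroup G) * Nat.card (H4 ⊓ P : Subgroup G) ≤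
      Nat.card (P : Subgroup G) * Nat.card (H3 ⊓ H4 : Subgroup G) := by
    rw [← ingleton_aux_card_sup_mul_card_inf (H3 ⊓ P) (H4 ⊓ P)]
    exact Nat.mul_le_mul (mono _ _ (sup_le inf_le_right inf_le_right))
      (mono _ _ (le_inf (inf_le_left.trans inf_le_left)
        (inf_le_right.trans inf_le_left)))
  have key : Nat.card (P : Subgroup G) * Nat.card (H1 ⊓ H2 : Subgroup G) =
      Nat.card H1 * Nat.card H2 := ingleton_aux_card_sup_mul_card_inf H1 H2
  calc Nat.card (H1 ⊓ H2 : Subgroup G) * Nat.card (H1 ⊓ H3 : Subgroup G) *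
        Nat.card (H1 ⊓ H4 : Subgroup G) * Nat.card (H2 ⊓ H3 : Subgroup G) *
        Nat.card (H2 ⊓ H4 : Subgroup G)
      = Nat.card (H1 ⊓ H2 : Subgroup G) *
          ((Nat.card (H1 ⊓ H3 : Subgroup G) * Nat.card (H2 ⊓ H3 : Subgroup G)) *
           (Nat.card (H1 ⊓ H4 : Subgroup G) * Nat.card (H2 ⊓ H4 : Subgroup G))) := by ring
    _ ≤ Nat.card (H1 ⊓ H2 : Subgroup G) *
          ((Nat.card (H3 ⊓ P : Subgroup G) * Nat.card (H1 ⊓ H2 ⊓ H3 : Subgroup G)) *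
           (Nat.card (H4 ⊓ P : Subgroup G) * Nat.card (H1 ⊓ H2 ⊓ H4 : Subgroup G))) :=
        Nat.mul_le_mul_left _ (Nat.mul_le_mul step3 step4)
    _ = Nat.card (H1 ⊓ H2 : Subgroup G) *
          (Nat.card (H3 ⊓ P : Subgroup G) * Nat.card (H4 ⊓ P : Subgroup G)) *
          (Nat.card (H1 ⊓ H2 ⊓ H3 : Subgroup G) * Nat.card (H1 ⊓ H2 ⊓ H4 : Subgroup G)) := by
        ring
    _ ≤ Nat.card (H1 ⊓ H2 : Subgroup G) *
          (Nat.card (P : Subgroup G) * Nat.card (H3 ⊓ H4 : Subgroup G)) *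
          (Nat.card (H1 ⊓ H2 ⊓ H3 : Subgroup G) * Nat.card (H1 ⊓ H2 ⊓ H4 : Subgroup G)) :=
        Nat.mul_le_mul_right _ (Nat.mul_le_mul_left _ step34)
    _ = Nat.card (P : Subgroup G) * Nat.card (H1 ⊓ H2 : Subgroup G) *
          Nat.card (H3 ⊓ H4 : Subgroup G) * Nat.card (H1 ⊓ H2 ⊓ H3 : Subgroup G) *
          Nat.card (H1 ⊓ H2 ⊓ H4 : Subgroup G) := by ring
    _ = Nat.card H1 * Nat.card H2 * Nat.card (H3 ⊓ H4 : Subgroup G) *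
          Nat.card (H1 ⊓ H2 ⊓ H3 : Subgroup G) * Nat.card (H1 ⊓ H2 ⊓ H4 : Subgroup G) := by
        rw [key]
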